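/- For every positive integer n ≥ 1, the prime sum graph G_{2n} has a perfect matching. -/

import Mathlib

/-- The prime sum graph of order `m`: vertices are `{1, ..., m}`, and two distinct
vertices are adjacent iff their sum is prime. -/
def primeSumGraph (m : ℕ) : SimpleGraph (Finset.Icc 1 m) where
  Adj i j := i ≠ j ∧ Nat.Prime (i.1 + j.1)
  symm := by
    constructor
    rintro i j ⟨h1, h2⟩
    exact ⟨h1.symm, by rwa [Nat.add_comm]⟩
  loopless := by constructor; rintro i ⟨h, _⟩; exact h rfl

/-- Key combinatorial lemma: there is an involutive pairing of `{1,...,2n}`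
with prime pair sums. -/
lemma primeSumGraph.exists_pairing (n : ℕ) :
    ∃ f : ℕ → ℕ, ∀ k, 1 ≤ k → k ≤ 2 * n →
      1 ≤ f k ∧ f k ≤ 2 * n ∧ f (f k) = k ∧ f k ≠ k ∧ Nat.Prime (k + f k) := by
  induction n using Nat.strong_induction_on with
  | _ n ih =>
    rcases Nat.eq_zero_or_pos n with h0 | hpos
    · exact ⟨id, fun k h1 h2 => absurd h2 (by omega)⟩
    · obtain ⟨p, pp, hp1, hp2⟩ := Nat.exists_prime_lt_and_le_two_mul (2 * n) (by omega)
      have hodd : p % 2 = 1 := by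
        rcases pp.eq_two_or_odd with h | h
        · omega
        · exact h
      set a := p - 2 * n with ha
      have ha1 : 1 ≤ a := by omega
      have ha2 : a ≤ 2 * n := by omega
      have haodd : a % 2 = 1 := by omega
      obtain ⟨f', hf'⟩ := ih ((a - 1) / 2) (by omega)
      have hdiv : 2 * ((a - 1) / 2) = a - 1 := by omega
      refine ⟨fun k => if k ≤ a - 1 then f' k else p - k, fun k hk1 hk2 => ?_⟩
      by_cases hka : k ≤ a - 1
      · obtain ⟨h1, h2, h3, h4, h5⟩ := hf' k hk1 (by omega)
        have h2' : f' k ≤ a - 1 := by omega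
        simp only [if_pos hka, if_pos h2']
        exact ⟨h1, by omega, h3, h4, h5⟩
      · have hk3 : a ≤ k := by omega
        have hlt : ¬ (p - k ≤ a - 1) := by omega
        simp only [if_neg hka, if_neg hlt]
        refine ⟨by omega, by omega, by omega, by omega, ?_⟩
        have : k + (p - k) = p := by omega
        rwa [this]

/-- The prime sum graph `G_{2n}` has a perfect matching for every `n ≥ 1`. -/
theorem primeSumGraph_perfect_matching (n : ℕ) (hn : 1 ≤ n) :
    ∃ M : (primeSumGraph (2 * n)).Subgraph, M.IsPerfectMatching := by
  obtain ⟨f, hf⟩ := primeSumGraph.exists_pairing n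
  have mem_iff : ∀ k : ℕ, k ∈ Finset.Icc 1 (2 * n) ↔ 1 ≤ k ∧ k ≤ 2 * n := by
    intro k; simp [Finset.mem_Icc]
  have key : ∀ v : Finset.Icc 1 (2 * n),
      1 ≤ f v.1 ∧ f v.1 ≤ 2 * n ∧ f (f v.1) = v.1 ∧ f v.1 ≠ v.1 ∧ Nat.Prime (v.1 + f v.1) := by
    intro v
    have := v.2
    rw [mem_iff] at this
    exact hf v.1 this.1 this.2
  refine ⟨⟨Set.univ, fun i j => (primeSumGraph (2 * n)).Adj i j ∧ f i.1 = j.1,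
      fun h => h.1, fun _ => trivial, ?_⟩, ?_⟩
  · constructor
    intro i j ⟨hadj, hfi⟩
    refine ⟨hadj.symm, ?_⟩
    have := (key i).2.2.1
    rw [hfi] at this
    exact this
  · rw [SimpleGraph.Subgraph.isPerfectMatching_iff]
    intro v
    obtain ⟨h1, h2, h3, h4, h5⟩ := key v
    refine ⟨⟨f v.1, (mem_iff _).2 ⟨h1, h2⟩⟩, ⟨⟨?_, h5⟩, rfl⟩, ?_⟩
    · intro heq
      exact h4 (congrArg Subtype.val heq.symm)
    · rintro w ⟨_, hw⟩
      exact Subtype.ext hw.symm
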